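/- Let F be a field, s ∈ F^n, μ a minimal polynomial of s with LC = deg(μ) and e = n + 1 - 2·LC > 0, μ(0) = 0, and let μ' be a minimal polynomial of the prefix (s_1,…,s_{n'}) where n' is maximal with LC(s_1,…,s_{n'}) < LC (so μ'(0) ≠ 0). Then for any polynomial q of degree e and any a ∈ F∖{0}, the polynomial q·μ + a·μ' is an annihilator of s of degree e + LC = n + 1 - LC with nonzero constant term, and this degree is minimal among annihilators of s not vanishing at 0. -/

import Mathlib

open Polynomial

/-- `f` annihilates the finite sequence `s 1, …, s n`:
`f = 0` or `f_0 s_{j-d} + ⋯ + f_d s_j = 0` for all `d+1 ≤ j ≤ n`, where `d = deg f`. -/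
def Annihilates {D : Type*} [CommRing D] (n : ℕ) (s : ℕ → D) (f : Polynomial D) : Prop :=
  f = 0 ∨ ∀ j : ℕ, f.natDegree + 1 ≤ j → j ≤ n →
    ∑ k ∈ Finset.range (f.natDegree + 1), f.coeff k * s (j - f.natDegree + k) = 0

/-- Linear complexity: minimal degree of a nonzero annihilator of `s 1, …, s n`. -/
noncomputable def LC {D : Type*} [CommRing D] (n : ℕ) (s : ℕ → D) : ℕ :=
  sInf {d | ∃ f : Polynomial D, f ≠ 0 ∧ Annihilates n s f ∧ f.natDegree = d}

/-- A minimal polynomial: a nonzero annihilator of minimal degree. -/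
def IsMinPoly {D : Type*} [CommRing D] (n : ℕ) (s : ℕ → D) (μ : Polynomial D) : Prop :=
  μ ≠ 0 ∧ Annihilates n s μ ∧ μ.natDegree = LC n s

/-- Discrepancy `Δ(f, s) = Σ_{k=0}^{d} f_k s_{n-d+k}` where `d = deg f`. -/
def Disc {D : Type*} [CommRing D] (n : ℕ) (s : ℕ → D) (f : Polynomial D) : D :=
  ∑ k ∈ Finset.range (f.natDegree + 1), f.coeff k * s (n - f.natDegree + k)

/-- The polynomial part `f_2` of the Laurent product `f · (s_1 x^{-1} + ⋯ + s_n x^{-n})`. -/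
noncomputable def polyPart {D : Type*} [CommRing D] (n : ℕ) (s : ℕ → D) (f : Polynomial D) :
    Polynomial D :=
  ∑ j ∈ Finset.range f.natDegree,
    Polynomial.C (∑ m ∈ Finset.Icc 1 n, f.coeff (j + m) * s m) * Polynomial.X ^ j

/-- The coefficient of `x^j` (for `j : ℤ`) in the Laurent product
`f · (s_1 x^{-1} + ⋯ + s_n x^{-n})`. -/
def laurentCoeff {D : Type*} [CommRing D] (n : ℕ) (s : ℕ → D) (f : Polynomial D) (j : ℤ) : D :=
  ∑ m ∈ Finset.Icc 1 n, if 0 ≤ j + (m : ℤ) then f.coeff (j + (m : ℤ)).toNat * s m else 0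

section Aux
open Finset
variable {F : Type*} [Field F]

/-- `Sv s f t = Σ_k f_k s_{t+k}`. -/
noncomputable def Sv (s : ℕ → F) (f : F[X]) (t : ℕ) : F :=
  f.sum fun k c => c * s (t + k)

lemma Sv_eq_range (s : ℕ → F) (f : F[X]) (t : ℕ) {N : ℕ} (hN : f.natDegree < N) :
    Sv s f t = ∑ k ∈ range N, f.coeff k * s (t + k) :=
  f.sum_over_range' (f := fun k c => c * s (t + k)) (fun _ => zero_mul _) N hN

lemma Sv_zero (s : ℕ → F) (t : ℕ) : Sv s (0 : F[X]) t = 0 := Polynomial.sum_zero_index _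

lemma Sv_add (s : ℕ → F) (f g : F[X]) (t : ℕ) :
    Sv s (f + g) t = Sv s f t + Sv s g t :=
  Polynomial.sum_add_index _ _ (fun k c => c * s (t + k)) (fun _ => zero_mul _)
    (fun _ _ _ => add_mul _ _ _)

lemma Sv_Cmul (s : ℕ → F) (c : F) (f : F[X]) (t : ℕ) :
    Sv s (C c * f) t = c * Sv s f t := by
  rw [Sv_eq_range s (C c * f) t (Nat.lt_succ_of_le (natDegree_C_mul_le c f)),
    Sv_eq_range s f t (Nat.lt_succ_self _), Finset.mul_sum]
  exact Finset.sum_congr rfl fun k _ => by rw [coeff_C_mul]; ring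

lemma Sv_sub (s : ℕ → F) (f g : F[X]) (t : ℕ) :
    Sv s (f - g) t = Sv s f t - Sv s g t := by
  have : f - g = f + C (-1) * g := by ring_nf; rw [map_neg, map_one]; ring
  rw [this, Sv_add, Sv_Cmul]; ring

lemma Sv_Xmul (s : ℕ → F) (f : F[X]) (t : ℕ) :
    Sv s (X * f) t = Sv s f (t + 1) := by
  rcases eq_or_ne f 0 with rfl | hf
  · simp [Sv_zero]
  rw [Sv_eq_range s (X * f) t (N := f.natDegree + 2)
      (by rw [natDegree_X_mul hf]; omega),
    Sv_eq_range s f (t + 1) (Nat.lt_succ_self _), Finset.sum_range_succ']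
  have h0 : (X * f).coeff 0 = 0 := by simp [Polynomial.mul_coeff_zero]
  rw [h0, zero_mul, add_zero]
  exact Finset.sum_congr rfl fun k _ => by rw [coeff_X_mul]; congr 2; omega

lemma Sv_Xpow_mul (s : ℕ → F) (a : ℕ) (f : F[X]) (t : ℕ) :
    Sv s (X ^ a * f) t = Sv s f (t + a) := by
  induction a generalizing t with
  | zero => simp
  | succ a ih =>
    have : X ^ (a + 1) * f = X * (X ^ a * f) := by ring
    rw [this, Sv_Xmul, ih]
    congr 1
    omega

lemma Sv_mul_sum (s : ℕ → F) (f g : F[X]) (t : ℕ) :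
    Sv s (f * g) t = f.sum fun k c => c * Sv s g (t + k) := by
  induction f using Polynomial.induction_on' with
  | add p q hp hq =>
    rw [add_mul, Sv_add, hp, hq,
      ← Polynomial.sum_add_index p q (fun k c => c * Sv s g (t + k)) (fun _ => zero_mul _)
        (fun _ _ _ => add_mul _ _ _)]
  | monomial n a =>
    rw [Polynomial.sum_monomial_index a (fun k c => c * Sv s g (t + k)) (zero_mul _)]
    have : (monomial n a : F[X]) * g = C a * (X ^ n * g) := by
      rw [← C_mul_X_pow_eq_monomial]; ring
    rw [this, Sv_Cmul, Sv_Xpow_mul]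

lemma Sv_mul (s : ℕ → F) (f g : F[X]) (t : ℕ) :
    Sv s (f * g) t = ∑ k ∈ range (f.natDegree + 1), f.coeff k * Sv s g (t + k) := by
  rw [Sv_mul_sum]
  exact f.sum_over_range' (f := fun k c => c * Sv s g (t + k)) (fun _ => zero_mul _) _
    (Nat.lt_succ_self _)

lemma Sv_swap (s : ℕ → F) (f g : F[X]) (t : ℕ) :
    ∑ k ∈ range (f.natDegree + 1), f.coeff k * Sv s g (t + k)
      = ∑ l ∈ range (g.natDegree + 1), g.coeff l * Sv s f (t + l) := by
  rw [← Sv_mul, ← Sv_mul, mul_comm]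

/-- `Ann n s f`: the homogeneous annihilation conditions phrased via `Sv`. -/
def Ann (n : ℕ) (s : ℕ → F) (f : F[X]) : Prop :=
  ∀ t : ℕ, 1 ≤ t → t + f.natDegree ≤ n → Sv s f t = 0

lemma annihilates_iff {n : ℕ} {s : ℕ → F} {f : F[X]} :
    Annihilates n s f ↔ (f = 0 ∨ Ann n s f) := by
  unfold Annihilates Ann
  apply or_congr_right
  constructor
  · intro H t ht1 ht2
    have := H (t + f.natDegree) (by omega) (by omega)
    rw [Nat.add_sub_cancel] at this
    rw [Sv_eq_range s f t (Nat.lt_succ_self _)]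
    exact this
  · intro H j hj1 hj2
    have := H (j - f.natDegree) (by omega) (by omega)
    rw [Sv_eq_range s f _ (Nat.lt_succ_self _)] at this
    exact this

lemma Ann.mono {n m : ℕ} {s : ℕ → F} {f : F[X]} (h : Ann n s f) (hmn : m ≤ n) : Ann m s f :=
  fun t ht1 ht2 => h t ht1 (le_trans ht2 hmn)

lemma ann_Xpow (n : ℕ) (s : ℕ → F) : Ann n s (X ^ n : F[X]) := by
  intro t ht1 ht2
  rw [natDegree_X_pow] at ht2
  exact absurd ht2 (by omega)

lemma LC_le_of_ann {n : ℕ} {s : ℕ → F} {f : F[X]} (hf : f ≠ 0) (h : Ann n s f) :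
    LC n s ≤ f.natDegree :=
  Nat.sInf_le ⟨f, hf, annihilates_iff.mpr (Or.inr h), rfl⟩

lemma exists_minPoly (n : ℕ) (s : ℕ → F) : ∃ μ : F[X], IsMinPoly n s μ := by
  have hne : {d | ∃ f : F[X], f ≠ 0 ∧ Annihilates n s f ∧ f.natDegree = d}.Nonempty :=
    ⟨n, X ^ n, pow_ne_zero n X_ne_zero,
      annihilates_iff.mpr (Or.inr (ann_Xpow n s)), natDegree_X_pow n⟩
  obtain ⟨f, hf0, hfa, hfd⟩ := Nat.sInf_mem hne
  exact ⟨f, hf0, hfa, hfd⟩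

lemma minPoly_ann {n : ℕ} {s : ℕ → F} {μ : F[X]} (h : IsMinPoly n s μ) : Ann n s μ :=
  (annihilates_iff.mp h.2.1).resolve_left h.1

lemma LC_le_self (n : ℕ) (s : ℕ → F) : LC n s ≤ n := by
  have := LC_le_of_ann (pow_ne_zero n X_ne_zero) (ann_Xpow n s)
  simpa using this

lemma LC_mono {m n : ℕ} (s : ℕ → F) (h : m ≤ n) : LC m s ≤ LC n s := by
  obtain ⟨μ, hμ⟩ := exists_minPoly n s
  calc LC m s ≤ μ.natDegree := LC_le_of_ann hμ.1 ((minPoly_ann hμ).mono h)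
    _ = LC n s := hμ.2.2

lemma fail_loc {m : ℕ} {s : ℕ → F} {f : F[X]} (h1 : Ann m s f) (h2 : ¬ Ann (m+1) s f) :
    ∃ t, 1 ≤ t ∧ t + f.natDegree = m + 1 ∧ Sv s f t ≠ 0 := by
  unfold Ann at h2; push_neg at h2
  obtain ⟨t, ht1, ht2, ht3⟩ := h2
  refine ⟨t, ht1, ?_, ht3⟩
  by_contra hne
  exact ht3 (h1 t ht1 (by omega))

lemma key_ge {m : ℕ} {s : ℕ → F} {f g : F[X]} (hfa : Ann m s f)
    (hff : ¬ Ann (m+1) s f) (hg : g ≠ 0) (hga : Ann (m+1) s g) :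
    m + 1 ≤ f.natDegree + g.natDegree := by
  obtain ⟨tf, htf1, htf2, htf3⟩ := fail_loc hfa hff
  by_contra hlt
  push_neg at hlt
  have hswap := Sv_swap s g f (tf - g.natDegree)
  rw [Finset.sum_range_succ] at hswap
  rw [Finset.sum_eq_zero (fun k hk => by
      rw [Finset.mem_range] at hk
      rw [hfa (tf - g.natDegree + k) (by omega) (by omega), mul_zero])] at hswap
  rw [zero_add, show tf - g.natDegree + g.natDegree = tf by omega] at hswap
  rw [Finset.sum_eq_zero (fun l hl => by
      rw [Finset.mem_range] at hl
      rw [hga (tf - g.natDegree + l) (by omega) (by omega), mul_zero])] at hswap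
  rcases mul_eq_zero.mp hswap with h | h
  · exact leadingCoeff_ne_zero.mpr hg h
  · exact htf3 h

lemma LC_zero (s : ℕ → F) : LC 0 s = 0 :=
  Nat.le_zero.mp (LC_le_self 0 s)

/-- Massey's inequality. -/
lemma jump_le (s : ℕ → F) : ∀ m : ℕ,
    LC (m+1) s ≤ LC m s ∨ LC (m+1) s + LC m s ≤ m + 1 := by
  intro m
  induction m using Nat.strong_induction_on with
  | _ m IH =>
  obtain ⟨f, hf⟩ := exists_minPoly m s
  set d := LC m s with hd
  by_cases hfa : Ann (m+1) s f
  · exact Or.inl (le_trans (LC_le_of_ann hf.1 hfa) (le_of_eq hf.2.2))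
  rcases Nat.eq_zero_or_pos d with hd0 | hd1
  · right
    have := LC_le_self (m+1) s
    omega
  have hm0 : 0 < m := by
    rcases Nat.eq_zero_or_pos m with rfl | h
    · rw [LC_zero] at hd; omega
    · exact h
  have hSne : {k | k < m ∧ LC k s < d}.Nonempty := ⟨0, hm0, by rw [LC_zero]; omega⟩
  have hSbd : BddAbove {k | k < m ∧ LC k s < d} := ⟨m, fun k hk => le_of_lt hk.1⟩
  set m₀ := sSup {k | k < m ∧ LC k s < d} with hm₀def
  obtain ⟨hm₀m, hm₀lt⟩ : m₀ < m ∧ LC m₀ s < d := Nat.sSup_mem hSne hSbd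
  set d₀ := LC m₀ s with hd₀
  have hmax : ∀ k, k < m → LC k s < d → k ≤ m₀ := fun k h1 h2 => le_csSup hSbd ⟨h1, h2⟩
  have hLCm₀1 : LC (m₀+1) s = d := by
    have h1 : LC (m₀+1) s ≤ d := hd ▸ LC_mono s (by omega)
    rcases Nat.lt_or_ge (LC (m₀+1) s) d with h | h
    · rcases Nat.lt_or_ge (m₀+1) m with h2 | h2
      · exact absurd (hmax _ h2 h) (by omega)
      · have he : m₀ + 1 = m := by omega
        rw [he] at h; omega
    · omega
  obtain ⟨f₀, hf₀⟩ := exists_minPoly m₀ s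
  have hf₀f : ¬ Ann (m₀+1) s f₀ := fun h => by
    have := LC_le_of_ann hf₀.1 h
    rw [hf₀.2.2] at this
    omega
  have hjump : d + d₀ = m₀ + 1 := by
    have h1 : d + d₀ ≤ m₀ + 1 := by
      rcases IH m₀ hm₀m with h | h
      · rw [hLCm₀1] at h; omega
      · rw [hLCm₀1] at h; omega
    obtain ⟨g₀, hg₀⟩ := exists_minPoly (m₀+1) s
    have := key_ge (minPoly_ann hf₀) hf₀f hg₀.1 (minPoly_ann hg₀)
    rw [hf₀.2.2, hg₀.2.2, hLCm₀1, ← hd₀] at this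
    omega
  obtain ⟨t₀, ht₀1, ht₀2, ht₀3⟩ := fail_loc (minPoly_ann hf₀) hf₀f
  obtain ⟨tf, htf1, htf2, htf3⟩ := fail_loc (minPoly_ann hf) hfa
  have hdf : f.natDegree = d := hf.2.2
  have hdf₀ : f₀.natDegree = d₀ := hf₀.2.2
  have ht₀d : t₀ = d := by omega
  have htfd₀ : d₀ + 1 ≤ tf := by omega
  set D := max d tf with hD
  have hdD : d ≤ D := le_max_left _ _
  have htfD : tf ≤ D := le_max_right _ _
  set g : F[X] := C (Sv s f₀ t₀) * (X ^ (D - d) * f) - C (Sv s f tf) * (X ^ (D - tf) * f₀)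
    with hg
  have hA : (C (Sv s f₀ t₀) * (X ^ (D - d) * f)).natDegree = D := by
    rw [natDegree_mul (C_ne_zero.mpr ht₀3) (mul_ne_zero (pow_ne_zero _ X_ne_zero) hf.1),
      natDegree_mul (pow_ne_zero _ X_ne_zero) hf.1, natDegree_C, natDegree_X_pow, hdf]
    omega
  have hB : (C (Sv s f tf) * (X ^ (D - tf) * f₀)).natDegree < D :=
    lt_of_le_of_lt (natDegree_C_mul_le _ _)
      (by rw [natDegree_mul (pow_ne_zero _ X_ne_zero) hf₀.1, natDegree_X_pow, hdf₀]; omega)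
  have hdegg : g.natDegree = D := by
    rw [hg, natDegree_sub_eq_left_of_natDegree_lt (by rw [hA]; exact hB), hA]
  have hgne : g ≠ 0 := fun h => by rw [h, natDegree_zero] at hdegg; omega
  have hSg : ∀ t, Sv s g t
      = Sv s f₀ t₀ * Sv s f (t + (D - d)) - Sv s f tf * Sv s f₀ (t + (D - tf)) := fun t => by
    rw [hg, Sv_sub, Sv_Cmul, Sv_Cmul, Sv_Xpow_mul, Sv_Xpow_mul]
  have hann : Ann (m+1) s g := by
    intro t ht1 ht2
    rw [hdegg] at ht2
    rw [hSg]
    rcases Nat.lt_or_ge (t + D) (m+1) with hc | hc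
    · rw [minPoly_ann hf (t + (D - d)) (by omega) (by omega),
        minPoly_ann hf₀ (t + (D - tf)) (by omega) (by omega)]
      ring
    · have e1 : t + (D - d) = tf := by omega
      have e2 : t + (D - tf) = t₀ := by omega
      rw [e1, e2]; ring
  have hle : LC (m+1) s ≤ D := hdegg ▸ LC_le_of_ann hgne hann
  rcases max_cases d tf with ⟨h1, _⟩ | ⟨h1, _⟩
  · left
    rw [hD, h1] at hle
    omega
  · right
    rw [hD, h1] at hle
    omega

end Aux

theorem stmt_19 {F : Type*} [Field F] (n : ℕ) (s : ℕ → F)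
    (μ : Polynomial F) (hμ : IsMinPoly n s μ) (h0 : μ.eval 0 = 0)
    (he : 2 * LC n s < n + 1)
    (n' : ℕ) (hn'1 : n' < n) (hn'2 : LC n' s < LC n s)
    (hn'max : ∀ m : ℕ, m < n → LC m s < LC n s → m ≤ n')
    (μ' : Polynomial F) (hμ' : IsMinPoly n' s μ')
    (q : Polynomial F) (hq : q.natDegree = n + 1 - 2 * LC n s) (hq0 : q ≠ 0)
    (a : F) (ha : a ≠ 0) :
    Annihilates n s (q * μ + Polynomial.C a * μ') ∧
    (q * μ + Polynomial.C a * μ').natDegree = n + 1 - LC n s ∧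
    (q * μ + Polynomial.C a * μ').eval 0 ≠ 0 ∧
    (∀ g : Polynomial F, Annihilates n s g → g.eval 0 ≠ 0 →
      n + 1 - LC n s ≤ g.natDegree) := by
  set L := LC n s with hL
  set d' := LC n' s with hd'
  have hμa : Ann n s μ := minPoly_ann hμ
  have hdμ : μ.natDegree = L := hμ.2.2
  have hd'a : Ann n' s μ' := minPoly_ann hμ'
  have hdμ' : μ'.natDegree = d' := hμ'.2.2
  have h2L : 2 * L ≤ n := by omega
  have hL1 : 1 ≤ L := by
    rcases Nat.eq_zero_or_pos L with h | h
    · exfalso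
      have hc : μ = C (μ.coeff 0) := eq_C_of_natDegree_eq_zero (by rw [hdμ, h])
      rw [coeff_zero_eq_eval_zero, h0, map_zero] at hc
      exact hμ.1 hc
    · exact h
  -- the complexity of every window between n' and n equals L
  have hLCn'1 : LC (n' + 1) s = L := by
    have h1 : LC (n' + 1) s ≤ L := LC_mono s (by omega)
    rcases Nat.lt_or_ge (LC (n' + 1) s) L with h | h
    · rcases Nat.lt_or_ge (n' + 1) n with h2 | h2
      · have := hn'max _ h2 h
        omega
      · have he2 : n' + 1 = n := by omega
        rw [he2] at h
        omega
    · omega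
  have hμ'f : ¬ Ann (n' + 1) s μ' := fun h => by
    have := LC_le_of_ann hμ'.1 h
    rw [hdμ', hLCn'1] at this
    omega
  -- the jump theorem:  n' + 1 = L + d'
  have hjump : n' + 1 = L + d' := by
    have h1 : L + d' ≤ n' + 1 := by
      rcases jump_le s n' with h | h
      · rw [hLCn'1] at h; omega
      · rw [hLCn'1] at h; omega
    have h2 := key_ge hd'a hμ'f hμ.1 (hμa.mono (by omega))
    rw [hdμ', hdμ] at h2
    omega
  obtain ⟨t', ht'1, ht'2, ht'3⟩ := fail_loc hd'a hμ'f
  have ht'L : t' = L := by omega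
  -- μ = X * ν
  set ν := μ.divX with hν
  have hc0 : μ.coeff 0 = 0 := by rw [coeff_zero_eq_eval_zero, h0]
  have hμX : μ = X * ν := by
    have h := X_mul_divX_add μ
    rw [hc0, map_zero, add_zero] at h
    exact h.symm
  have hνne : ν ≠ 0 := fun h => hμ.1 (by rw [hμX, h, mul_zero])
  have hdν : ν.natDegree + 1 = L := by
    have h := natDegree_mul (X_ne_zero (R := F)) hνne
    rw [← hμX, natDegree_X, hdμ] at h
    omega
  have hSν : ∀ t, 2 ≤ t → t + L ≤ n + 1 → Sv s ν t = 0 := by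
    intro t ht1 ht2
    have h := hμa (t - 1) (by omega) (by omega)
    rw [hμX, Sv_Xmul] at h
    rwa [show t - 1 + 1 = t by omega] at h
  have hSν1 : Sv s ν 1 ≠ 0 := by
    intro hz
    have hann : Ann n s ν := by
      intro t ht1 ht2
      rcases Nat.lt_or_ge t 2 with h | h
      · rw [show t = 1 by omega]
        exact hz
      · exact hSν t h (by omega)
    have := LC_le_of_ann hνne hann
    omega
  -- μ' has nonzero constant term
  have hμ'0 : μ'.coeff 0 ≠ 0 := by
    intro hz
    have hswap := Sv_swap s μ' ν 1
    rw [Finset.sum_eq_zero (fun k hk => by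
        rw [Finset.mem_range] at hk
        rcases Nat.eq_zero_or_pos k with rfl | hk1
        · rw [hz, zero_mul]
        · rw [hSν (1 + k) (by omega) (by omega), mul_zero])] at hswap
    rw [Finset.sum_range_succ] at hswap
    rw [Finset.sum_eq_zero (fun l hl => by
        rw [Finset.mem_range] at hl
        rw [hd'a (1 + l) (by omega) (by omega), mul_zero])] at hswap
    rw [zero_add, show 1 + ν.natDegree = L by omega] at hswap
    rcases mul_eq_zero.mp hswap.symm with h | h
    · exact leadingCoeff_ne_zero.mpr hνne h
    · exact ht'3 (by rw [ht'L]; exact h)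
  -- degrees
  have hdegA : (q * μ).natDegree = n + 1 - L := by
    rw [natDegree_mul hq0 hμ.1, hq, hdμ]
    omega
  have hdegB : (C a * μ').natDegree = d' := by
    rw [natDegree_mul (C_ne_zero.mpr ha) hμ'.1, natDegree_C, hdμ']
    omega
  have hdlt : (C a * μ').natDegree < (q * μ).natDegree := by
    rw [hdegA, hdegB]
    omega
  have hdeg : (q * μ + C a * μ').natDegree = n + 1 - L := by
    rw [natDegree_add_eq_left_of_natDegree_lt hdlt, hdegA]
  have hne : q * μ + C a * μ' ≠ 0 := fun h => by
    rw [h, natDegree_zero] at hdeg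
    omega
  -- annihilation
  have hannh : Ann n s (q * μ + C a * μ') := by
    intro t ht1 ht2
    rw [hdeg] at ht2
    rw [Sv_add, Sv_Cmul]
    have h1 : Sv s (q * μ) t = 0 := by
      rw [Sv_mul]
      exact Finset.sum_eq_zero fun k hk => by
        rw [Finset.mem_range] at hk
        rw [hμa (t + k) (by omega) (by omega), mul_zero]
    have h2 : Sv s μ' t = 0 := hd'a t ht1 (by omega)
    rw [h1, h2, mul_zero, add_zero]
  -- nonzero constant term
  have heval : (q * μ + C a * μ').eval 0 ≠ 0 := by
    rw [eval_add, eval_mul, eval_mul, h0, mul_zero, eval_C, zero_add]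
    exact mul_ne_zero ha (by rwa [← coeff_zero_eq_eval_zero])
  -- minimality
  have hmin : ∀ g : Polynomial F, Annihilates n s g → g.eval 0 ≠ 0 →
      n + 1 - L ≤ g.natDegree := by
    intro g hga hg0
    have hgne : g ≠ 0 := fun h => hg0 (by rw [h, eval_zero])
    have hganns : Ann n s g := (annihilates_iff.mp hga).resolve_left hgne
    by_contra hlt
    push_neg at hlt
    have hswap := Sv_swap s g ν 1
    rw [Finset.sum_range_succ'] at hswap
    rw [Finset.sum_eq_zero (fun k hk => by
        rw [Finset.mem_range] at hk
        rw [hSν (1 + (k + 1)) (by omega) (by omega), mul_zero])] at hswap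
    rw [zero_add] at hswap
    rw [Finset.sum_eq_zero (fun l hl => by
        rw [Finset.mem_range] at hl
        rw [hganns (1 + l) (by omega) (by omega), mul_zero])] at hswap
    rcases mul_eq_zero.mp hswap with h | h
    · exact hg0 (by rwa [coeff_zero_eq_eval_zero] at h)
    · exact hSν1 (by rwa [show 1 + 0 = 1 from rfl] at h)
  exact ⟨annihilates_iff.mpr (Or.inr hannh), hdeg, heval, hmin⟩
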